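/- Let d ≥ 1, let Φ be the maximally entangled vector indexed by Fin d × Fin d with Φ(j,k) = 1/√d if j = k and 0 otherwise, and let p ∈ [0,1]. Then there exists a positive semidefinite complex matrix τ indexed by (Fin d × Fin d) × (Fin d × Fin d) with trace 1 such that (1/d²) • 1 = p • (ΦΦᴴ) + (1 − p) • τ if and only if p ≤ 1/d². That is, the maximum weight of the maximally entangled state in an ensemble decomposition of the invariant state of two conjugate systems — the maximum probability of conclusive teleportation — equals 1/d². -/

import Mathlib

open Matrix
open scoped ComplexOrder

noncomputable section

/-- The maximally entangled vector on `ℂ^d ⊗ ℂ^d`. -/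
def PhiME (d : ℕ) : Fin d × Fin d → ℂ := fun p =>
  if p.1 = p.2 then ((1 / Real.sqrt d : ℝ) : ℂ) else 0

/-- outer product `v vᴴ` of a complex vector with itself. -/
def outerC {α : Type*} (v : α → ℂ) : Matrix α α ℂ :=
  Matrix.of fun a b => v a * star (v b)

lemma outerC_mulVec {α : Type*} [Fintype α] (v x : α → ℂ) :
    outerC v *ᵥ x = fun a => (star v ⬝ᵥ x) * v a := by
  funext a
  simp only [outerC, mulVec, dotProduct, of_apply, Pi.star_apply, Finset.sum_mul]
  exact Finset.sum_congr rfl fun c _ => by ring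

lemma quad_outerC {α : Type*} [Fintype α] (v x : α → ℂ) :
    star x ⬝ᵥ (outerC v *ᵥ x) = ((Complex.normSq (star v ⬝ᵥ x) : ℝ) : ℂ) := by
  rw [outerC_mulVec]
  have : star x ⬝ᵥ (fun a => (star v ⬝ᵥ x) * v a)
      = (star v ⬝ᵥ x) * (star x ⬝ᵥ v) := by
    simp only [dotProduct, Pi.star_apply, Finset.mul_sum]
    exact Finset.sum_congr rfl fun c _ => by ring
  rw [this]
  have hsx : star (star v ⬝ᵥ x) = star x ⬝ᵥ v := by
    simp only [dotProduct, Pi.star_apply, star_sum, StarMul.star_mul, star_star]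
  rw [← hsx, Complex.star_def, Complex.mul_conj]

lemma outerC_isHermitian {α : Type*} (v : α → ℂ) : (outerC v).IsHermitian := by
  ext a b
  simp [outerC, conjTranspose_apply, mul_comm]

lemma outerC_posSemidef {α : Type*} [Fintype α] (v : α → ℂ) : (outerC v).PosSemidef := by
  refine PosSemidef.of_dotProduct_mulVec_nonneg (outerC_isHermitian v) fun x => ?_
  rw [quad_outerC]
  exact_mod_cast Complex.normSq_nonneg _

lemma phi_norm {d : ℕ} (hd : 1 ≤ d) : star (PhiME d) ⬝ᵥ PhiME d = 1 := by
  have hd0 : (0:ℝ) < d := by exact_mod_cast Nat.lt_of_lt_of_le Nat.zero_lt_one hd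
  have h1 : ∀ a : Fin d × Fin d, star (PhiME d a) * PhiME d a
      = if a.1 = a.2 then ((1/(d:ℝ) : ℝ) : ℂ) else 0 := by
    intro a
    rcases eq_or_ne a.1 a.2 with h | h
    · simp only [PhiME, h, if_true, Complex.star_def, Complex.conj_ofReal,
        ← Complex.ofReal_mul]
      congr 1
      rw [div_mul_div_comm, one_mul, Real.mul_self_sqrt hd0.le]
    · simp [PhiME, h]
  simp only [dotProduct, Pi.star_apply, h1]
  rw [Fintype.sum_prod_type]
  simp only [Finset.sum_ite_eq, Finset.mem_univ, if_true]
  rw [Finset.sum_const, Finset.card_univ, Fintype.card_fin, nsmul_eq_mul]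
  rw [← Complex.ofReal_natCast, ← Complex.ofReal_mul]
  rw [mul_one_div, div_self hd0.ne']
  norm_num

lemma phi_sum_sq {d : ℕ} (hd : 1 ≤ d) :
    ∑ a : Fin d × Fin d, Complex.normSq (PhiME d a) = 1 := by
  have := phi_norm hd
  have h : star (PhiME d) ⬝ᵥ PhiME d
      = ((∑ a : Fin d × Fin d, Complex.normSq (PhiME d a) : ℝ) : ℂ) := by
    simp only [dotProduct, Pi.star_apply, Complex.ofReal_sum]
    exact Finset.sum_congr rfl fun a _ => by
      rw [Complex.star_def, mul_comm, Complex.mul_conj]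
  rw [h] at this
  exact_mod_cast this

lemma trace_outerC_phi {d : ℕ} (hd : 1 ≤ d) : (outerC (PhiME d)).trace = 1 := by
  have h : (outerC (PhiME d)).trace = star (PhiME d) ⬝ᵥ PhiME d := by
    simp only [trace, diag, outerC, of_apply, dotProduct, Pi.star_apply]
    exact Finset.sum_congr rfl fun a _ => by ring
  rw [h, phi_norm hd]

/-- Cauchy–Schwarz for the maximally entangled vector. -/
lemma phi_cs {d : ℕ} (hd : 1 ≤ d) (x : Fin d × Fin d → ℂ) :
    Complex.normSq (star (PhiME d) ⬝ᵥ x) ≤ ∑ a : Fin d × Fin d, Complex.normSq (x a) := by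
  have hd0 : (0:ℝ) < d := by exact_mod_cast Nat.lt_of_lt_of_le Nat.zero_lt_one hd
  have hc : star (PhiME d) ⬝ᵥ x
      = ((1 / Real.sqrt d : ℝ) : ℂ) * ∑ j : Fin d, x (j, j) := by
    simp only [dotProduct, Pi.star_apply, PhiME]
    rw [Fintype.sum_prod_type, Finset.mul_sum]
    refine Finset.sum_congr rfl fun j _ => ?_
    rw [Finset.sum_eq_single j]
    · simp
    · intro k _ hk; simp [Ne.symm hk]
    · simp
  rw [hc, Complex.normSq_mul, Complex.normSq_ofReal]
  have hsq : (1 / Real.sqrt d) * (1 / Real.sqrt d) = 1 / d := by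
    rw [div_mul_div_comm, one_mul, Real.mul_self_sqrt hd0.le]
  rw [hsq]
  have hcs : Complex.normSq (∑ j : Fin d, x (j, j))
      ≤ (d : ℝ) * ∑ j : Fin d, Complex.normSq (x (j, j)) := by
    have h1 : ‖∑ j : Fin d, x (j, j)‖ ≤ ∑ j : Fin d, ‖x (j, j)‖ := by
      simpa using norm_sum_le Finset.univ (fun j : Fin d => x (j, j))
    have h2 : (∑ j : Fin d, ‖x (j, j)‖)^2
        ≤ (d : ℝ) * ∑ j : Fin d, (‖x (j, j)‖)^2 := by
      have := sq_sum_le_card_mul_sum_sq (s := (Finset.univ : Finset (Fin d)))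
        (f := fun j => ‖x (j, j)‖)
      simpa using this
    calc Complex.normSq (∑ j : Fin d, x (j, j))
        = (‖∑ j : Fin d, x (j, j)‖)^2 := (Complex.sq_norm _).symm
      _ ≤ (∑ j : Fin d, ‖x (j, j)‖)^2 := by
          apply pow_le_pow_left₀ (norm_nonneg _) h1
      _ ≤ (d : ℝ) * ∑ j : Fin d, (‖x (j, j)‖)^2 := h2
      _ = (d : ℝ) * ∑ j : Fin d, Complex.normSq (x (j, j)) := by
          simp [Complex.sq_norm]
  have hdiag : ∑ j : Fin d, Complex.normSq (x (j, j))
      ≤ ∑ a : Fin d × Fin d, Complex.normSq (x a) := by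
    rw [Fintype.sum_prod_type]
    refine Finset.sum_le_sum fun j _ => ?_
    exact Finset.single_le_sum (f := fun k => Complex.normSq (x (j, k)))
      (fun k _ => Complex.normSq_nonneg _) (Finset.mem_univ j)
  calc 1 / (d:ℝ) * Complex.normSq (∑ j : Fin d, x (j, j))
      ≤ 1 / (d:ℝ) * ((d : ℝ) * ∑ j : Fin d, Complex.normSq (x (j, j))) := by
        apply mul_le_mul_of_nonneg_left hcs (by positivity)
    _ = ∑ j : Fin d, Complex.normSq (x (j, j)) := by field_simp
    _ ≤ _ := hdiag

theorem stmt12 (d : ℕ) (hd : 1 ≤ d) (p : ℝ) (hp0 : 0 ≤ p) (hp1 : p ≤ 1) :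
    (∃ τ : Matrix (Fin d × Fin d) (Fin d × Fin d) ℂ,
        τ.PosSemidef ∧ τ.trace = 1 ∧
        (1 / (d ^ 2 : ℝ)) • (1 : Matrix (Fin d × Fin d) (Fin d × Fin d) ℂ)
          = p • outerC (PhiME d) + (1 - p) • τ)
      ↔ p ≤ 1 / (d ^ 2 : ℝ) := by
  have hd0 : (0:ℝ) < d := by exact_mod_cast Nat.lt_of_lt_of_le Nat.zero_lt_one hd
  constructor
  · rintro ⟨τ, hτpsd, hτtr, heq⟩
    -- apply the quadratic form at Φ
    have h := congrArg (fun M => star (PhiME d) ⬝ᵥ (M *ᵥ PhiME d)) heq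
    simp only [add_mulVec, smul_mulVec, dotProduct_add, dotProduct_smul] at h
    rw [one_mulVec, phi_norm hd, quad_outerC, phi_norm hd] at h
    simp only [Complex.normSq_one, Complex.ofReal_one, smul_eq_mul, mul_one] at h
    set q : ℂ := star (PhiME d) ⬝ᵥ (τ *ᵥ PhiME d) with hq
    have hq0 : 0 ≤ q := hτpsd.dotProduct_mulVec_nonneg _
    rw [Complex.nonneg_iff] at hq0
    rw [Complex.real_smul, Complex.real_smul, Complex.real_smul, mul_one, mul_one] at h
    have hre := congrArg Complex.re h
    simp only [Complex.add_re, Complex.mul_re, Complex.ofReal_re, Complex.ofReal_im,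
      ← hq0.2, mul_zero, zero_mul, sub_zero, add_zero] at hre
    have hmn := mul_nonneg (sub_nonneg.mpr hp1) hq0.1
    linarith [hre.symm.le]
  · intro hple
    by_cases hp : p = 1
    · -- then d = 1 and everything is the rank-one projection
      have hd1 : d = 1 := by
        by_contra hne
        have h2 : 2 ≤ d := by omega
        have : (4:ℝ) ≤ (d:ℝ)^2 := by nlinarith [show (2:ℝ) ≤ d by exact_mod_cast h2]
        have : 1 / ((d:ℝ)^2) ≤ 1/4 := by
          apply div_le_div_of_nonneg_left <;> nlinarith
        linarith [hple, hp ▸ hple]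
      subst hd1 hp
      refine ⟨outerC (PhiME 1), outerC_posSemidef _, trace_outerC_phi le_rfl, ?_⟩
      have hP : outerC (PhiME 1) = 1 := by
        ext a b
        have ha : a = b := Subsingleton.elim a b
        subst ha
        have : a = ((0 : Fin 1), (0 : Fin 1)) := Subsingleton.elim _ _
        subst this
        simp [outerC, PhiME, one_apply]
      rw [hP]
      norm_num
    · have hp1' : p < 1 := lt_of_le_of_ne hp1 hp
      have hq : (0:ℝ) < 1 - p := by linarith
      set P := outerC (PhiME d) with hP
      refine ⟨(1 - p)⁻¹ • ((1 / ((d:ℝ) ^ 2)) • (1 : Matrix (Fin d × Fin d) (Fin d × Fin d) ℂ)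
          - p • P), PosSemidef.of_dotProduct_mulVec_nonneg ?_ ?_, ?_, ?_⟩
      · -- Hermitian
        have h2 : P.IsHermitian := outerC_isHermitian (PhiME d)
        show _ᴴ = _
        rw [conjTranspose_smul, conjTranspose_sub, conjTranspose_smul, conjTranspose_smul,
          conjTranspose_one, h2.eq]
        simp [star_trivial]
      · -- quadratic form nonneg
        intro x
        have hmv : ((1 - p)⁻¹ • ((1 / ((d:ℝ) ^ 2)) • (1 : Matrix (Fin d × Fin d) (Fin d × Fin d) ℂ)
            - p • P)) *ᵥ x
            = (1 - p)⁻¹ • ((1 / ((d:ℝ)^2)) • ((1 : Matrix (Fin d × Fin d) (Fin d × Fin d) ℂ) *ᵥ x)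
              - p • (P *ᵥ x)) := by
          rw [smul_mulVec, sub_mulVec, smul_mulVec, smul_mulVec]
        rw [hmv, one_mulVec]
        rw [dotProduct_smul, dotProduct_sub, dotProduct_smul, dotProduct_smul]
        have hs : star x ⬝ᵥ x = ((∑ a : Fin d × Fin d, Complex.normSq (x a) : ℝ) : ℂ) := by
          simp only [dotProduct, Pi.star_apply, Complex.ofReal_sum]
          exact Finset.sum_congr rfl fun a _ => by
            rw [Complex.star_def, mul_comm, Complex.mul_conj]
        rw [hs, quad_outerC]
        set S : ℝ := ∑ a : Fin d × Fin d, Complex.normSq (x a) with hS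
        set t : ℝ := Complex.normSq (star (PhiME d) ⬝ᵥ x) with ht
        have key : (1 - p)⁻¹ • ((1 / ((d:ℝ)^2)) • ((S:ℝ):ℂ) - p • ((t:ℝ):ℂ))
            = (((1 - p)⁻¹ * ((1 / ((d:ℝ)^2)) * S - p * t) : ℝ) : ℂ) := by
          push_cast [Complex.real_smul]
          ring
        rw [key]
        rw [Complex.le_def]
        constructor
        · simp only [Complex.zero_re, Complex.ofReal_re]
          have hts : t ≤ S := phi_cs hd x
          have ht0 : 0 ≤ t := Complex.normSq_nonneg _
          have : p * t ≤ (1 / ((d:ℝ)^2)) * S := by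
            calc p * t ≤ (1 / ((d:ℝ)^2)) * t := by
                  apply mul_le_mul_of_nonneg_right hple ht0
              _ ≤ (1 / ((d:ℝ)^2)) * S := by
                  apply mul_le_mul_of_nonneg_left hts (by positivity)
          have h2 : 0 ≤ (1 / ((d:ℝ)^2)) * S - p * t := by linarith
          positivity
        · rw [Complex.zero_im, Complex.ofReal_im]
      · -- trace
        rw [trace_smul, trace_sub, trace_smul, trace_smul, trace_one, hP,
          trace_outerC_phi hd]
        have hcard : (Fintype.card (Fin d × Fin d) : ℂ) = ((d:ℂ))^2 := by
          simp [Fintype.card_prod, sq]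
        rw [hcard]
        have hdneC : ((d:ℂ)) ≠ 0 := Nat.cast_ne_zero.mpr (by omega)
        have hpneC : ((1 - p : ℝ) : ℂ) ≠ 0 := Complex.ofReal_ne_zero.mpr hq.ne'
        rw [Complex.real_smul, Complex.real_smul, Complex.real_smul, mul_one]
        push_cast at hpneC ⊢
        field_simp
      · -- the decomposition equation
        rw [smul_smul]
        have : (1 - p) * (1 - p)⁻¹ = 1 := mul_inv_cancel₀ (ne_of_gt hq)
        rw [this, one_smul]
        abel
end
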